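/- Fix M, M' ≤ M, L, H with M = 2L + H. Let (δ₁, δ₂) and (δ₁', δ₂') be two pairs of good boundary operators (M×M matrices over ZMod 2 with square zero), each of rank L. Then for every natural number R, the number of M'×M' matrices over ZMod 2 of rank R that are reduced cycles for (δ₁, δ₂) equals the number of M'×M' matrices of rank R that are reduced cycles for (δ₁', δ₂'). -/

import Mathlib

open Matrix LinearMap Module Submodule

variable {F : Type*} [Field F]

section Glue

variable {V W : Type*} [AddCommGroup V] [Module F V] [AddCommGroup W] [Module F W]
  {P Q : Submodule F V} {P' Q' : Submodule F W}

noncomputable def glueEquiv (h : IsCompl P Q) (h' : IsCompl P' Q')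
    (eP : P ≃ₗ[F] P') (eQ : Q ≃ₗ[F] Q') : V ≃ₗ[F] W :=
  ((Submodule.prodEquivOfIsCompl P Q h).symm.trans (eP.prodCongr eQ)).trans
    (Submodule.prodEquivOfIsCompl P' Q' h')

lemma glueEquiv_left (h : IsCompl P Q) (h' : IsCompl P' Q')
    (eP : P ≃ₗ[F] P') (eQ : Q ≃ₗ[F] Q') (x : P) :
    glueEquiv h h' eP eQ (x : V) = (eP x : W) := by
  simp [glueEquiv, Submodule.prodEquivOfIsCompl_symm_apply_left,
    Submodule.coe_prodEquivOfIsCompl']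

lemma glueEquiv_right (h : IsCompl P Q) (h' : IsCompl P' Q')
    (eP : P ≃ₗ[F] P') (eQ : Q ≃ₗ[F] Q') (x : Q) :
    glueEquiv h h' eP eQ (x : V) = (eQ x : W) := by
  simp [glueEquiv, Submodule.prodEquivOfIsCompl_symm_apply_right,
    Submodule.coe_prodEquivOfIsCompl']

end Glue

section Conj

variable {M : ℕ}

/-- A complement of the kernel containing a subspace disjoint from it. -/
lemma exists_compl_ker_ge (f : (Fin M → F) →ₗ[F] (Fin M → F))
    (V' : Submodule F (Fin M → F)) (hd : Disjoint (ker f) V') :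
    ∃ U : Submodule F (Fin M → F), IsCompl (ker f) U ∧ V' ≤ U := by
  obtain ⟨U₀, hU₀⟩ := Submodule.exists_isCompl (V' ⊔ ker f)
  refine ⟨V' ⊔ U₀, ⟨?_, ?_⟩, le_sup_left⟩
  · rw [disjoint_def]
    intro v hvK hvU
    obtain ⟨a, ha, b, hb, rfl⟩ := Submodule.mem_sup.mp hvU
    have hbmem : b ∈ (V' ⊔ ker f) ⊓ U₀ := by
      constructor
      · have : b = (a + b) - a := by ring
        rw [this]
        exact Submodule.sub_mem _ (Submodule.mem_sup_right hvK) (Submodule.mem_sup_left ha)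
      · exact hb
    rw [hU₀.inf_eq_bot] at hbmem
    simp only [Submodule.mem_bot] at hbmem
    subst hbmem
    have : a ∈ ker f ⊓ V' := ⟨by simpa using hvK, ha⟩
    rw [hd.eq_bot] at this
    simpa using this
  · rw [codisjoint_iff]
    have h2 := codisjoint_iff.mp hU₀.codisjoint
    rw [← h2]
    ac_rfl

/-- `f` restricted to a complement of its kernel, as an equivalence onto the range. -/
noncomputable def fUequiv (f : (Fin M → F) →ₗ[F] (Fin M → F))
    {U : Submodule F (Fin M → F)} (hK : IsCompl (ker f) U) :
    U ≃ₗ[F] (range f) := by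
  refine LinearEquiv.ofBijective ((f ∘ₗ U.subtype).codRestrict (range f)
    (fun u => ⟨u, rfl⟩)) ⟨?_, ?_⟩
  · intro x y hxy
    have h1 : f x = f y := by
      simpa [LinearMap.codRestrict, Subtype.ext_iff] using hxy
    have h2 : (x : Fin M → F) - y ∈ ker f ⊓ U := by
      refine ⟨?_, Submodule.sub_mem _ x.2 y.2⟩
      simp [LinearMap.mem_ker, map_sub, h1]
    rw [hK.inf_eq_bot] at h2
    exact Subtype.ext (sub_eq_zero.mp (Submodule.mem_bot (R := F) |>.mp h2))
  · rintro ⟨y, v, rfl⟩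
    have hv : v ∈ ker f ⊔ U := by rw [hK.sup_eq_top]; trivial
    obtain ⟨k, hk, u, hu, rfl⟩ := Submodule.mem_sup.mp hv
    refine ⟨⟨u, hu⟩, Subtype.ext ?_⟩
    have hk0 : f k = 0 := hk
    simp [LinearMap.codRestrict, map_add, hk0]

lemma fUequiv_apply (f : (Fin M → F) →ₗ[F] (Fin M → F))
    {U : Submodule F (Fin M → F)} (hK : IsCompl (ker f) U) (u : U) :
    (fUequiv f hK u : Fin M → F) = f u := rfl

end Conj

section Main

variable {M L : ℕ}

set_option maxHeartbeats 4000000 in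
set_option synthInstance.maxHeartbeats 4000000 in
lemma exists_conj_equiv (f f' : (Fin M → F) →ₗ[F] (Fin M → F))
    (hf : f ∘ₗ f = 0) (hf' : f' ∘ₗ f' = 0)
    (hr : finrank F (range f) = L) (hr' : finrank F (range f') = L)
    (V' : Submodule F (Fin M → F))
    (hd : Disjoint (ker f) V') (hd' : Disjoint (ker f') V') :
    ∃ e : (Fin M → F) ≃ₗ[F] (Fin M → F),
      f' ∘ₗ (e : (Fin M → F) →ₗ[F] (Fin M → F)) = (e : (Fin M → F) →ₗ[F] (Fin M → F)) ∘ₗ f ∧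
      V'.map (e : (Fin M → F) →ₗ[F] (Fin M → F)) = V' := by
  classical
  -- range ≤ ker
  have hRK : range f ≤ ker f := by
    rintro _ ⟨v, rfl⟩
    simpa [LinearMap.mem_ker] using congrFun (congrArg DFunLike.coe hf) v
  have hRK' : range f' ≤ ker f' := by
    rintro _ ⟨v, rfl⟩
    simpa [LinearMap.mem_ker] using congrFun (congrArg DFunLike.coe hf') v
  obtain ⟨U, hK, hV'U⟩ := exists_compl_ker_ge f V' hd
  obtain ⟨U', hK', hV'U'⟩ := exists_compl_ker_ge f' V' hd'
  -- subspaces inside U, ker f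
  set Vh : Submodule F U := V'.comap U.subtype with hVh
  set Vh' : Submodule F U' := V'.comap U'.subtype with hVh'
  obtain ⟨Uh, hUc⟩ := Submodule.exists_isCompl Vh
  obtain ⟨Uh', hUc'⟩ := Submodule.exists_isCompl Vh'
  set Rh : Submodule F (ker f) := (range f).comap (ker f).subtype with hRh
  set Rh' : Submodule F (ker f') := (range f').comap (ker f').subtype with hRh'
  obtain ⟨Wh, hWc⟩ := Submodule.exists_isCompl Rh
  obtain ⟨Wh', hWc'⟩ := Submodule.exists_isCompl Rh'
  -- finrank bookkeeping
  have hMfin : finrank F (Fin M → F) = M := Module.finrank_fin_fun F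
  have e1 : finrank F (range f) + finrank F (ker f) = M := by
    have := LinearMap.finrank_range_add_finrank_ker f; rwa [hMfin] at this
  have e1' : finrank F (range f') + finrank F (ker f') = M := by
    have := LinearMap.finrank_range_add_finrank_ker f'; rwa [hMfin] at this
  have e2 : finrank F (ker f) + finrank F U = M := by
    have := Submodule.finrank_add_eq_of_isCompl hK; rwa [hMfin] at this
  have e2' : finrank F (ker f') + finrank F U' = M := by
    have := Submodule.finrank_add_eq_of_isCompl hK'; rwa [hMfin] at this
  have e3 : finrank F Vh + finrank F Uh = finrank F U :=
    Submodule.finrank_add_eq_of_isCompl hUc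
  have e3' : finrank F Vh' + finrank F Uh' = finrank F U' :=
    Submodule.finrank_add_eq_of_isCompl hUc'
  have e4 : finrank F Rh + finrank F Wh = finrank F (ker f) :=
    Submodule.finrank_add_eq_of_isCompl hWc
  have e4' : finrank F Rh' + finrank F Wh' = finrank F (ker f') :=
    Submodule.finrank_add_eq_of_isCompl hWc'
  have e5 : finrank F Vh = finrank F V' :=
    LinearEquiv.finrank_eq (Submodule.comapSubtypeEquivOfLe hV'U)
  have e5' : finrank F Vh' = finrank F V' :=
    LinearEquiv.finrank_eq (Submodule.comapSubtypeEquivOfLe hV'U')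
  have e6 : finrank F Rh = L := by
    rw [LinearEquiv.finrank_eq (Submodule.comapSubtypeEquivOfLe hRK), hr]
  have e6' : finrank F Rh' = L := by
    rw [LinearEquiv.finrank_eq (Submodule.comapSubtypeEquivOfLe hRK'), hr']
  have hUh : finrank F Uh = finrank F Uh' := by omega
  have hWh : finrank F Wh = finrank F Wh' := by omega
  -- the building-block equivalences
  haveI : FiniteDimensional F ↥U := FiniteDimensional.finiteDimensional_submodule U
  haveI : FiniteDimensional F ↥U' := FiniteDimensional.finiteDimensional_submodule U'
  haveI : Module.Free F ↥Uh := Module.Free.of_divisionRing F ↥Uh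
  haveI : Module.Free F ↥Uh' := Module.Free.of_divisionRing F ↥Uh'
  haveI : Module.Free F ↥Wh := Module.Free.of_divisionRing F ↥Wh
  haveI : Module.Free F ↥Wh' := Module.Free.of_divisionRing F ↥Wh'
  haveI : Module.Finite F ↥Uh := FiniteDimensional.finiteDimensional_submodule Uh
  haveI : Module.Finite F ↥Uh' := FiniteDimensional.finiteDimensional_submodule Uh'
  haveI : Module.Finite F ↥Wh := FiniteDimensional.finiteDimensional_submodule Wh
  haveI : Module.Finite F ↥Wh' := FiniteDimensional.finiteDimensional_submodule Wh'
  set eV : Vh ≃ₗ[F] Vh' :=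
    (Submodule.comapSubtypeEquivOfLe hV'U).trans
      (Submodule.comapSubtypeEquivOfLe hV'U').symm with heV
  set eUh : Uh ≃ₗ[F] Uh' := LinearEquiv.ofFinrankEq _ _ hUh with heUh
  set eWh : Wh ≃ₗ[F] Wh' := LinearEquiv.ofFinrankEq _ _ hWh with heWh
  set eU : U ≃ₗ[F] U' := glueEquiv hUc hUc' eV eUh with heU
  set fU := fUequiv f hK with hfU
  set fU' := fUequiv f' hK' with hfU'
  set eR : (range f) ≃ₗ[F] (range f') := (fU.symm.trans eU).trans fU' with heR
  set eRc : Rh ≃ₗ[F] Rh' :=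
    ((Submodule.comapSubtypeEquivOfLe hRK).trans eR).trans
      (Submodule.comapSubtypeEquivOfLe hRK').symm with heRc
  set eK : (ker f) ≃ₗ[F] (ker f') := glueEquiv hWc hWc' eRc eWh with heK
  set e : (Fin M → F) ≃ₗ[F] (Fin M → F) := glueEquiv hK hK' eK eU with he
  -- basic evaluation lemmas
  have heOnU : ∀ u : U, e (u : Fin M → F) = (eU u : Fin M → F) :=
    fun u => glueEquiv_right hK hK' eK eU u
  have heOnK : ∀ k : ker f, e (k : Fin M → F) = (eK k : Fin M → F) :=
    fun k => glueEquiv_left hK hK' eK eU k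
  have heUOnV : ∀ x : Vh, eU (x : U) = ((eV x : Vh') : U') :=
    fun x => glueEquiv_left hUc hUc' eV eUh x
  have heKOnR : ∀ x : Rh, eK (x : ker f) = ((eRc x : Rh') : ker f') :=
    fun x => glueEquiv_left hWc hWc' eRc eWh x
  refine ⟨e, ?_, ?_⟩
  · -- intertwining
    refine LinearMap.ext fun v => ?_
    have hv : v ∈ ker f ⊔ U := by rw [hK.sup_eq_top]; trivial
    obtain ⟨k, hk, u, hu, rfl⟩ := Submodule.mem_sup.mp hv
    have hkpart : f' (e k) = e (f k) := by
      have hk0 : f k = 0 := hk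
      have : e (k : Fin M → F) = (eK ⟨k, hk⟩ : Fin M → F) := heOnK ⟨k, hk⟩
      rw [hk0, this, map_zero]
      exact (eK ⟨k, hk⟩).2
    have hupart : f' (e u) = e (f u) := by
      have hfuR : f u ∈ range f := ⟨u, rfl⟩
      have hfuK : f u ∈ ker f := hRK hfuR
      have hk₀R : (⟨f u, hfuK⟩ : ker f) ∈ Rh := by
        simpa [hRh, Submodule.mem_comap] using hfuR
      set x : Rh := ⟨⟨f u, hfuK⟩, hk₀R⟩ with hxdef
      set r : range f := Submodule.comapSubtypeEquivOfLe hRK x with hrdef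
      have hrval : (r : Fin M → F) = f u := by
        rw [hrdef, Submodule.comapSubtypeEquivOfLe_apply_coe]
      have h1 : e (f u) = ((eRc x : Rh') : ker f').1 :=
        (heOnK ⟨f u, hfuK⟩).trans (congrArg Subtype.val (heKOnR x))
      have h2 : ((eRc x : Rh') : ker f').1 = (eR r : Fin M → F) := by
        rw [heRc]
        simp only [LinearEquiv.trans_apply]
        rw [← hrdef]
        conv_rhs => rw [← LinearEquiv.apply_symm_apply (Submodule.comapSubtypeEquivOfLe hRK') (eR r)]
        exact (Submodule.comapSubtypeEquivOfLe_apply_coe hRK' _).symm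
      have h4 : fU.symm r = ⟨u, hu⟩ := by
        rw [LinearEquiv.symm_apply_eq]
        apply Subtype.ext
        rw [hrval]
        exact (fUequiv_apply f hK ⟨u, hu⟩).symm
      have h3 : (eR r : Fin M → F) = f' (eU ⟨u, hu⟩ : Fin M → F) := by
        rw [heR]
        simp only [LinearEquiv.trans_apply]
        rw [h4]
        exact fUequiv_apply f' hK' (eU ⟨u, hu⟩)
      rw [h1, h2, h3, show e (u : Fin M → F) = (eU ⟨u, hu⟩ : Fin M → F) from heOnU ⟨u, hu⟩]
    simp only [LinearMap.comp_apply, LinearEquiv.coe_coe, map_add]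
    rw [hkpart, hupart]
  · -- V' is preserved
    apply le_antisymm
    · rintro _ ⟨v, hv, rfl⟩
      have hvU : v ∈ U := hV'U hv
      have hvVh : (⟨v, hvU⟩ : U) ∈ Vh := by simpa [hVh, Submodule.mem_comap] using hv
      have hev : e v = ((eV ⟨⟨v, hvU⟩, hvVh⟩ : Vh') : U').1 :=
        (heOnU ⟨v, hvU⟩).trans (congrArg Subtype.val (heUOnV ⟨⟨v, hvU⟩, hvVh⟩))
      rw [LinearEquiv.coe_coe, hev]
      exact (eV ⟨⟨v, hvU⟩, hvVh⟩ : Vh').2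
    · intro v' hv'
      have hvU' : v' ∈ U' := hV'U' hv'
      have hvVh' : (⟨v', hvU'⟩ : U') ∈ Vh' := by simpa [hVh', Submodule.mem_comap] using hv'
      set x : Vh := eV.symm ⟨⟨v', hvU'⟩, hvVh'⟩ with hx
      have hxmem : (((x : U) : Fin M → F)) ∈ V' := by
        have := (x : U).2
        exact x.2
      refine ⟨((x : U) : Fin M → F), hxmem, ?_⟩
      rw [LinearEquiv.coe_coe, heOnU, heUOnV, hx, LinearEquiv.apply_symm_apply]

end Main

section Mat

variable {M M' L : ℕ}

/-- The subspace of vectors vanishing on the first `M'` coordinates. -/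
noncomputable def lowSpace (F : Type*) [Field F] (hM' : M' ≤ M) : Submodule F (Fin M → F) :=
  LinearMap.ker (LinearMap.funLeft F F (Fin.castLE hM'))

lemma mem_lowSpace {F : Type*} [Field F] (hM' : M' ≤ M) (v : Fin M → F) :
    v ∈ lowSpace F hM' ↔ ∀ i : Fin M', v (Fin.castLE hM' i) = 0 := by
  simp [lowSpace, LinearMap.mem_ker, LinearMap.funLeft, funext_iff]

lemma exists_conj_matrix (hM' : M' ≤ M) (δ δ' : Matrix (Fin M) (Fin M) (ZMod 2))
    (hsq : δ * δ = 0) (hsq' : δ' * δ' = 0) (hrk : δ.rank = L) (hrk' : δ'.rank = L)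
    (hg : ∀ v : Fin M → ZMod 2, δ.mulVec v = 0 →
      (∀ i : Fin M', v (Fin.castLE hM' i) = 0) → v = 0)
    (hg' : ∀ v : Fin M → ZMod 2, δ'.mulVec v = 0 →
      (∀ i : Fin M', v (Fin.castLE hM' i) = 0) → v = 0) :
    ∃ A B : Matrix (Fin M) (Fin M) (ZMod 2), A * B = 1 ∧ B * A = 1 ∧
      δ' * A = A * δ ∧
      (∀ (i : Fin M') (k : Fin M), (M' : ℕ) ≤ (k : ℕ) → A (Fin.castLE hM' i) k = 0) ∧
      (∀ (i : Fin M') (k : Fin M), (M' : ℕ) ≤ (k : ℕ) → B (Fin.castLE hM' i) k = 0) := by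
  classical
  set f : (Fin M → ZMod 2) →ₗ[ZMod 2] (Fin M → ZMod 2) := Matrix.mulVecLin δ with hf
  set f' : (Fin M → ZMod 2) →ₗ[ZMod 2] (Fin M → ZMod 2) := Matrix.mulVecLin δ' with hf'
  have hff : f ∘ₗ f = 0 := by rw [hf, ← Matrix.mulVecLin_mul, hsq]; exact Matrix.mulVecLin_zero
  have hff' : f' ∘ₗ f' = 0 := by
    rw [hf', ← Matrix.mulVecLin_mul, hsq']; exact Matrix.mulVecLin_zero
  have hdisj : Disjoint (LinearMap.ker f) (lowSpace (ZMod 2) hM') := by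
    rw [Submodule.disjoint_def]
    intro v hv1 hv2
    exact hg v (by simpa [hf, Matrix.mulVecLin_apply] using hv1) ((mem_lowSpace hM' v).mp hv2)
  have hdisj' : Disjoint (LinearMap.ker f') (lowSpace (ZMod 2) hM') := by
    rw [Submodule.disjoint_def]
    intro v hv1 hv2
    exact hg' v (by simpa [hf', Matrix.mulVecLin_apply] using hv1) ((mem_lowSpace hM' v).mp hv2)
  have hrk2 : finrank (ZMod 2) (LinearMap.range f) = L := hrk
  have hrk2' : finrank (ZMod 2) (LinearMap.range f') = L := hrk'
  obtain ⟨e, hcomm, hmap⟩ :=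
    exists_conj_equiv f f' hff hff' hrk2 hrk2' (lowSpace (ZMod 2) hM') hdisj hdisj'
  have hmapsymm : ∀ v ∈ lowSpace (ZMod 2) hM', e.symm v ∈ lowSpace (ZMod 2) hM' := by
    intro v hv
    rw [← hmap] at hv
    obtain ⟨w, hw, hwe⟩ := hv
    have hwv : e.symm v = w := by
      rw [← hwe]; simp
    rwa [hwv]
  refine ⟨LinearMap.toMatrix' (e : (Fin M → ZMod 2) →ₗ[ZMod 2] (Fin M → ZMod 2)),
    LinearMap.toMatrix' (e.symm : (Fin M → ZMod 2) →ₗ[ZMod 2] (Fin M → ZMod 2)),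
    ?_, ?_, ?_, ?_, ?_⟩
  · rw [← LinearMap.toMatrix'_comp]
    simp
  · rw [← LinearMap.toMatrix'_comp]
    simp
  · have h2 := congrArg (fun t => LinearMap.toMatrix' t) hcomm
    simp only [LinearMap.toMatrix'_comp] at h2
    rwa [hf, hf', ← Matrix.toLin'_apply', ← Matrix.toLin'_apply',
      LinearMap.toMatrix'_toLin', LinearMap.toMatrix'_toLin'] at h2
  · intro i k hk
    rw [LinearMap.toMatrix'_apply]
    have hbk : (fun j' : Fin M => if j' = k then (1 : ZMod 2) else 0) ∈ lowSpace (ZMod 2) hM' := by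
      rw [mem_lowSpace]
      intro i'
      have hne : Fin.castLE hM' i' ≠ k := by
        intro hc
        have := congrArg Fin.val hc
        simp only [Fin.coe_castLE] at this
        omega
      simp [hne]
    have hm : e (fun j' : Fin M => if j' = k then (1 : ZMod 2) else 0) ∈ lowSpace (ZMod 2) hM' := by
      rw [← hmap]
      exact Submodule.mem_map_of_mem hbk
    rw [show (Pi.single k (1 : ZMod 2) : Fin M → ZMod 2) = fun j' => if j' = k then 1 else 0 from
      funext fun j' => Pi.single_apply k 1 j']
    exact (mem_lowSpace hM' _).mp hm i
  · intro i k hk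
    rw [LinearMap.toMatrix'_apply]
    have hbk : (fun j' : Fin M => if j' = k then (1 : ZMod 2) else 0) ∈ lowSpace (ZMod 2) hM' := by
      rw [mem_lowSpace]
      intro i'
      have hne : Fin.castLE hM' i' ≠ k := by
        intro hc
        have := congrArg Fin.val hc
        simp only [Fin.coe_castLE] at this
        omega
      simp [hne]
    rw [show (Pi.single k (1 : ZMod 2) : Fin M → ZMod 2) = fun j' => if j' = k then 1 else 0 from
      funext fun j' => Pi.single_apply k 1 j']
    exact (mem_lowSpace hM' _).mp (hmapsymm _ hbk) i

end Mat

section Blocks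

variable {M M' : ℕ}

/-- Top-left `M' × M'` block of an `M × M` matrix. -/
def blk (hM' : M' ≤ M) (X : Matrix (Fin M) (Fin M) (ZMod 2)) :
    Matrix (Fin M') (Fin M') (ZMod 2) :=
  Matrix.of fun i j => X (Fin.castLE hM' i) (Fin.castLE hM' j)

lemma sum_low {R : Type*} [AddCommMonoid R] (hM' : M' ≤ M) (t : Fin M → R)
    (h0 : ∀ k : Fin M, (M' : ℕ) ≤ (k : ℕ) → t k = 0) :
    ∑ k, t k = ∑ k' : Fin M', t (Fin.castLE hM' k') := by
  have hs : ∑ x ∈ Finset.univ.map (Fin.castLEEmb hM'), t x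
      = ∑ k' : Fin M', t (Fin.castLE hM' k') := by
    rw [Finset.sum_map]; rfl
  rw [← hs]
  refine (Finset.sum_subset (Finset.subset_univ _) ?_).symm
  intro x _ hx
  refine h0 x ?_
  by_contra hlt
  push_neg at hlt
  exact hx (Finset.mem_map.mpr ⟨⟨x, hlt⟩, Finset.mem_univ _, rfl⟩)

lemma blk_mul_left (hM' : M' ≤ M) {A : Matrix (Fin M) (Fin M) (ZMod 2)}
    (hA : ∀ (i : Fin M') (k : Fin M), (M' : ℕ) ≤ (k : ℕ) → A (Fin.castLE hM' i) k = 0)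
    (X : Matrix (Fin M) (Fin M) (ZMod 2)) :
    blk hM' (A * X) = blk hM' A * blk hM' X := by
  ext i j
  simp only [blk, Matrix.mul_apply, Matrix.of_apply]
  exact sum_low hM' _ (fun k hk => by rw [hA i k hk, zero_mul])

lemma blk_mul_rightT (hM' : M' ≤ M) {B : Matrix (Fin M) (Fin M) (ZMod 2)}
    (hB : ∀ (i : Fin M') (k : Fin M), (M' : ℕ) ≤ (k : ℕ) → B (Fin.castLE hM' i) k = 0)
    (X : Matrix (Fin M) (Fin M) (ZMod 2)) :
    blk hM' (X * Bᵀ) = blk hM' X * (blk hM' B)ᵀ := by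
  ext i j
  simp only [blk, Matrix.mul_apply, Matrix.of_apply, Matrix.transpose_apply]
  exact sum_low hM' _ (fun k hk => by rw [hB j k hk, mul_zero])

lemma blk_one (hM' : M' ≤ M) : blk hM' (1 : Matrix (Fin M) (Fin M) (ZMod 2)) = 1 := by
  ext i j
  simp only [blk, Matrix.of_apply, Matrix.one_apply]
  have : Fin.castLE hM' i = Fin.castLE hM' j ↔ i = j := by
    constructor
    · intro hc
      exact Fin.ext (by simpa using congrArg Fin.val hc)
    · rintro rfl; rfl
  simp [this]

end Blocks

section Count

variable {M M' : ℕ}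

lemma count_eq_of_conj (hM' : M' ≤ M)
    (δ₁ δ₂ δ₁' δ₂' A Ai B Bi : Matrix (Fin M) (Fin M) (ZMod 2))
    (hAAi : A * Ai = 1) (hAiA : Ai * A = 1) (hBBi : B * Bi = 1) (hBiB : Bi * B = 1)
    (hA : δ₁' * A = A * δ₁) (hB : δ₂' * B = B * δ₂)
    (hAblk : ∀ (i : Fin M') (k : Fin M), (M' : ℕ) ≤ (k : ℕ) → A (Fin.castLE hM' i) k = 0)
    (hAiblk : ∀ (i : Fin M') (k : Fin M), (M' : ℕ) ≤ (k : ℕ) → Ai (Fin.castLE hM' i) k = 0)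
    (hBblk : ∀ (i : Fin M') (k : Fin M), (M' : ℕ) ≤ (k : ℕ) → B (Fin.castLE hM' i) k = 0)
    (hBiblk : ∀ (i : Fin M') (k : Fin M), (M' : ℕ) ≤ (k : ℕ) → Bi (Fin.castLE hM' i) k = 0)
    (R : ℕ) :
    Nat.card {h : Matrix (Fin M') (Fin M') (ZMod 2) // h.rank = R ∧
      ∃ g : Matrix (Fin M) (Fin M) (ZMod 2), δ₁ * g + g * δ₂ᵀ = 0 ∧
        ∀ i j : Fin M', g (Fin.castLE hM' i) (Fin.castLE hM' j) = h i j} =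
    Nat.card {h : Matrix (Fin M') (Fin M') (ZMod 2) // h.rank = R ∧
      ∃ g : Matrix (Fin M) (Fin M) (ZMod 2), δ₁' * g + g * δ₂'ᵀ = 0 ∧
        ∀ i j : Fin M', g (Fin.castLE hM' i) (Fin.castLE hM' j) = h i j} := by
  classical
  -- block matrices and their inverses
  set A₀ := blk hM' A with hA₀
  set Ai₀ := blk hM' Ai with hAi₀
  set B₀ := blk hM' B with hB₀
  set Bi₀ := blk hM' Bi with hBi₀
  have hA₀i : A₀ * Ai₀ = 1 := by
    rw [hA₀, hAi₀, ← blk_mul_left hM' hAblk, hAAi, blk_one]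
  have hAi₀A : Ai₀ * A₀ = 1 := by
    rw [hA₀, hAi₀, ← blk_mul_left hM' hAiblk, hAiA, blk_one]
  have hB₀i : B₀ * Bi₀ = 1 := by
    rw [hB₀, hBi₀, ← blk_mul_left hM' hBblk, hBBi, blk_one]
  have hBi₀B : Bi₀ * B₀ = 1 := by
    rw [hB₀, hBi₀, ← blk_mul_left hM' hBiblk, hBiB, blk_one]
  -- inverse commutation relations
  have hAi : δ₁ * Ai = Ai * δ₁' := by
    have h1 : Ai * (δ₁' * A) * Ai = Ai * (A * δ₁) * Ai := by rw [hA]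
    calc δ₁ * Ai = 1 * δ₁ * Ai := by rw [Matrix.one_mul]
      _ = Ai * (A * δ₁) * Ai := by rw [← hAiA, Matrix.mul_assoc Ai A δ₁]
      _ = Ai * (δ₁' * A) * Ai := by rw [hA]
      _ = Ai * δ₁' * (A * Ai) := by
          rw [Matrix.mul_assoc, Matrix.mul_assoc, Matrix.mul_assoc]
      _ = Ai * δ₁' := by rw [hAAi, Matrix.mul_one]
  have hBi : δ₂ * Bi = Bi * δ₂' := by
    calc δ₂ * Bi = 1 * δ₂ * Bi := by rw [Matrix.one_mul]
      _ = Bi * (B * δ₂) * Bi := by rw [← hBiB, Matrix.mul_assoc Bi B δ₂]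
      _ = Bi * (δ₂' * B) * Bi := by rw [hB]
      _ = Bi * δ₂' * (B * Bi) := by
          rw [Matrix.mul_assoc, Matrix.mul_assoc, Matrix.mul_assoc]
      _ = Bi * δ₂' := by rw [hBBi, Matrix.mul_one]
  -- the rank-preserving maps
  have hdetA₀ : IsUnit A₀.det :=
    (Matrix.isUnit_iff_isUnit_det A₀).mp ⟨⟨A₀, Ai₀, hA₀i, hAi₀A⟩, rfl⟩
  have hdetAi₀ : IsUnit Ai₀.det :=
    (Matrix.isUnit_iff_isUnit_det Ai₀).mp ⟨⟨Ai₀, A₀, hAi₀A, hA₀i⟩, rfl⟩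
  have hdetB₀T : IsUnit B₀ᵀ.det := by
    rw [Matrix.det_transpose]
    exact (Matrix.isUnit_iff_isUnit_det B₀).mp ⟨⟨B₀, Bi₀, hB₀i, hBi₀B⟩, rfl⟩
  have hdetBi₀T : IsUnit Bi₀ᵀ.det := by
    rw [Matrix.det_transpose]
    exact (Matrix.isUnit_iff_isUnit_det Bi₀).mp ⟨⟨Bi₀, B₀, hBi₀B, hB₀i⟩, rfl⟩
  -- generic transport
  have key : ∀ (C₁ C₂ C₁' C₂' P Q : Matrix (Fin M) (Fin M) (ZMod 2)),
      C₁' * P = P * C₁ → C₂' * Q = Q * C₂ →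
      (∀ (i : Fin M') (k : Fin M), (M' : ℕ) ≤ (k : ℕ) → P (Fin.castLE hM' i) k = 0) →
      (∀ (i : Fin M') (k : Fin M), (M' : ℕ) ≤ (k : ℕ) → Q (Fin.castLE hM' i) k = 0) →
      ∀ (h : Matrix (Fin M') (Fin M') (ZMod 2)),
      (∃ g, C₁ * g + g * C₂ᵀ = 0 ∧
        ∀ i j : Fin M', g (Fin.castLE hM' i) (Fin.castLE hM' j) = h i j) →
      (∃ g, C₁' * g + g * C₂'ᵀ = 0 ∧
        ∀ i j : Fin M', g (Fin.castLE hM' i) (Fin.castLE hM' j) =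
          (blk hM' P * h * (blk hM' Q)ᵀ) i j) := by
    intro C₁ C₂ C₁' C₂' P Q hP hQ hPblk hQblk h ⟨g, hg1, hg2⟩
    refine ⟨P * g * Qᵀ, ?_, ?_⟩
    · have hQt : Qᵀ * C₂'ᵀ = C₂ᵀ * Qᵀ := by
        rw [← Matrix.transpose_mul, ← Matrix.transpose_mul, hQ]
      have e1 : C₁' * (P * g * Qᵀ) = P * C₁ * g * Qᵀ := by
        rw [← Matrix.mul_assoc, ← Matrix.mul_assoc, hP]
      have e2 : P * g * Qᵀ * C₂'ᵀ = P * g * C₂ᵀ * Qᵀ := by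
        rw [Matrix.mul_assoc (P * g) Qᵀ C₂'ᵀ, hQt, ← Matrix.mul_assoc]
      rw [e1, e2]
      have : P * C₁ * g * Qᵀ + P * g * C₂ᵀ * Qᵀ = P * (C₁ * g + g * C₂ᵀ) * Qᵀ := by
        rw [Matrix.mul_add, Matrix.add_mul, Matrix.mul_assoc P C₁ g,
          Matrix.mul_assoc P g C₂ᵀ]
      rw [this, hg1, Matrix.mul_zero, Matrix.zero_mul]
    · have hblkg : blk hM' g = h := by
        ext i j
        exact hg2 i j
      have : blk hM' (P * g * Qᵀ) = blk hM' P * h * (blk hM' Q)ᵀ := by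
        rw [Matrix.mul_assoc, blk_mul_left hM' hPblk, blk_mul_rightT hM' hQblk, hblkg,
          ← Matrix.mul_assoc]
      intro i j
      exact congrFun (congrFun this i) j
  -- ranks
  have hrank : ∀ h : Matrix (Fin M') (Fin M') (ZMod 2),
      (A₀ * h * B₀ᵀ).rank = h.rank := by
    intro h
    rw [Matrix.rank_mul_eq_left_of_isUnit_det B₀ᵀ (A₀ * h) hdetB₀T,
      Matrix.rank_mul_eq_right_of_isUnit_det A₀ h hdetA₀]
  have hranki : ∀ h : Matrix (Fin M') (Fin M') (ZMod 2),
      (Ai₀ * h * Bi₀ᵀ).rank = h.rank := by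
    intro h
    rw [Matrix.rank_mul_eq_left_of_isUnit_det Bi₀ᵀ (Ai₀ * h) hdetBi₀T,
      Matrix.rank_mul_eq_right_of_isUnit_det Ai₀ h hdetAi₀]
  -- cancellation
  have hcancel1 : ∀ h : Matrix (Fin M') (Fin M') (ZMod 2),
      Ai₀ * (A₀ * h * B₀ᵀ) * Bi₀ᵀ = h := by
    intro h
    have hBt : B₀ᵀ * Bi₀ᵀ = 1 := by
      rw [← Matrix.transpose_mul, hBi₀B, Matrix.transpose_one]
    calc Ai₀ * (A₀ * h * B₀ᵀ) * Bi₀ᵀ = Ai₀ * A₀ * h * (B₀ᵀ * Bi₀ᵀ) := by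
          simp only [Matrix.mul_assoc]
      _ = h := by rw [hAi₀A, hBt, Matrix.mul_one, Matrix.one_mul]
  have hcancel2 : ∀ h : Matrix (Fin M') (Fin M') (ZMod 2),
      A₀ * (Ai₀ * h * Bi₀ᵀ) * B₀ᵀ = h := by
    intro h
    have hBt : Bi₀ᵀ * B₀ᵀ = 1 := by
      rw [← Matrix.transpose_mul, hB₀i, Matrix.transpose_one]
    calc A₀ * (Ai₀ * h * Bi₀ᵀ) * B₀ᵀ = A₀ * Ai₀ * h * (Bi₀ᵀ * B₀ᵀ) := by
          simp only [Matrix.mul_assoc]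
      _ = h := by rw [hA₀i, hBt, Matrix.mul_one, Matrix.one_mul]
  apply Nat.card_congr
  refine
    { toFun := fun p => ⟨A₀ * p.1 * B₀ᵀ, ?_, ?_⟩
      invFun := fun p => ⟨Ai₀ * p.1 * Bi₀ᵀ, ?_, ?_⟩
      left_inv := ?_
      right_inv := ?_ }
  · rw [hrank p.1]
    exact p.2.1
  · exact key δ₁ δ₂ δ₁' δ₂' A B hA hB hAblk hBblk p.1 p.2.2
  · rw [hranki p.1]
    exact p.2.1
  · exact key δ₁' δ₂' δ₁ δ₂ Ai Bi hAi hBi hAiblk hBiblk p.1 p.2.2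
  · intro p
    apply Subtype.ext
    exact hcancel1 p.1
  · intro p
    apply Subtype.ext
    exact hcancel2 p.1

end Count


/-- The number of rank-`R` reduced cycles is the same for every pair of good boundary
operators of rank `L` (with `M = 2L + H`). -/
theorem reduced_cycle_count_independent (M M' L H : ℕ) (hM' : M' ≤ M)
    (hM : M = 2 * L + H)
    (δ₁ δ₂ δ₁' δ₂' : Matrix (Fin M) (Fin M) (ZMod 2))
    (h₁ : δ₁ * δ₁ = 0) (h₂ : δ₂ * δ₂ = 0) (h₁' : δ₁' * δ₁' = 0) (h₂' : δ₂' * δ₂' = 0)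
    (hr₁ : δ₁.rank = L) (hr₂ : δ₂.rank = L) (hr₁' : δ₁'.rank = L) (hr₂' : δ₂'.rank = L)
    (hg₁ : ∀ v : Fin M → ZMod 2, δ₁.mulVec v = 0 →
      (∀ i : Fin M', v (Fin.castLE hM' i) = 0) → v = 0)
    (hg₂ : ∀ v : Fin M → ZMod 2, δ₂.mulVec v = 0 →
      (∀ i : Fin M', v (Fin.castLE hM' i) = 0) → v = 0)
    (hg₁' : ∀ v : Fin M → ZMod 2, δ₁'.mulVec v = 0 →
      (∀ i : Fin M', v (Fin.castLE hM' i) = 0) → v = 0)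
    (hg₂' : ∀ v : Fin M → ZMod 2, δ₂'.mulVec v = 0 →
      (∀ i : Fin M', v (Fin.castLE hM' i) = 0) → v = 0)
    (R : ℕ) :
    Nat.card {h : Matrix (Fin M') (Fin M') (ZMod 2) // h.rank = R ∧
      ∃ g : Matrix (Fin M) (Fin M) (ZMod 2), δ₁ * g + g * δ₂ᵀ = 0 ∧
        ∀ i j : Fin M', g (Fin.castLE hM' i) (Fin.castLE hM' j) = h i j} =
    Nat.card {h : Matrix (Fin M') (Fin M') (ZMod 2) // h.rank = R ∧
      ∃ g : Matrix (Fin M) (Fin M) (ZMod 2), δ₁' * g + g * δ₂'ᵀ = 0 ∧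
        ∀ i j : Fin M', g (Fin.castLE hM' i) (Fin.castLE hM' j) = h i j} := by
  obtain ⟨A, Ai, hAAi, hAiA, hA, hAblk, hAiblk⟩ :=
    exists_conj_matrix hM' δ₁ δ₁' h₁ h₁' hr₁ hr₁' hg₁ hg₁'
  obtain ⟨B, Bi, hBBi, hBiB, hB, hBblk, hBiblk⟩ :=
    exists_conj_matrix hM' δ₂ δ₂' h₂ h₂' hr₂ hr₂' hg₂ hg₂'
  exact count_eq_of_conj hM' δ₁ δ₂ δ₁' δ₂' A Ai B Bi hAAi hAiA hBBi hBiB hA hB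
    hAblk hAiblk hBblk hBiblk R
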